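/- Let n ≥ 1, let σ ∈ Sym(n), and let f : ℝ^n → ℝ be the unique affine function with prescribed values f(v_j^σ) = c_j, j = 0,…,n, at the vertices v_0^σ,…,v_n^σ of the simplex Σ_σ. Then the Lebesgue integral ∫_{Σ_σ} f(x)² dx ≤ (1/(n+1)!) · Σ_{j=0}^n c_j². -/

import Mathlib

open MeasureTheory

noncomputable section

/-- The closed simplex `Σ_σ = { x ∈ ℝ^n : 0 ≤ x_{σ(1)} ≤ x_{σ(2)} ≤ … ≤ x_{σ(n)} ≤ 1 }`
of the standard simplicial decomposition of the unit cube. -/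
def simplexSet (n : ℕ) (σ : Equiv.Perm (Fin n)) : Set (Fin n → ℝ) :=
  {x | (∀ i, x i ∈ Set.Icc (0:ℝ) 1) ∧ ∀ i j : Fin n, i ≤ j → x (σ i) ≤ x (σ j)}

/-- The `k`-th vertex `v_k^σ ∈ {0,1}^n` of the simplex `Σ_σ`: it has coordinate `1` exactly at
the positions `σ(n), σ(n-1), …, σ(n-k+1)` (`1`-indexed), equivalently at those `j` with
`n - k ≤ σ⁻¹(j)` (`0`-indexed). -/
def simplexVertex (n : ℕ) (σ : Equiv.Perm (Fin n)) (k : ℕ) : Fin n → ℝ :=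
  fun j => if n - k ≤ (σ.symm j : ℕ) then 1 else 0




namespace SimplexAux

open Matrix

def corner (n : ℕ) : Set (Fin n → ℝ) := {u | (∀ i, 0 ≤ u i) ∧ ∑ i, u i ≤ 1}

lemma isClosed_corner (n : ℕ) : IsClosed (corner n) := by
  have h1 : IsClosed {u : Fin n → ℝ | ∀ i, 0 ≤ u i} := by
    have : {u : Fin n → ℝ | ∀ i, 0 ≤ u i} = ⋂ i, {u | 0 ≤ u i} := by ext; simp
    rw [this]
    exact isClosed_iInter fun i => isClosed_le continuous_const (continuous_apply i)
  have h2 : IsClosed {u : Fin n → ℝ | ∑ i, u i ≤ 1} :=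
    isClosed_le (by continuity) continuous_const
  exact h1.inter h2

lemma isCompact_corner (n : ℕ) : IsCompact (corner n) := by
  refine Metric.isCompact_of_isClosed_isBounded (isClosed_corner n) ?_
  refine Bornology.IsBounded.subset ((isCompact_univ_pi fun _ : Fin n =>
    isCompact_Icc (a := (0:ℝ)) (b := 1)).isBounded) ?_
  rintro u ⟨h1, h2⟩ i -
  refine ⟨h1 i, le_trans ?_ h2⟩
  exact Finset.single_le_sum (fun j _ => h1 j) (Finset.mem_univ i)

lemma measurableSet_corner (n : ℕ) : MeasurableSet (corner n) :=
  (isClosed_corner n).measurableSet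

lemma measurePreserving_toLin' {n : ℕ} (M : Matrix (Fin n) (Fin n) ℝ) (h : |M.det| = 1) :
    MeasurePreserving (Matrix.toLin' M) volume volume := by
  have hd : M.det ≠ 0 := by
    intro h0; rw [h0] at h; simp at h
  refine ⟨(LinearMap.continuous_of_finiteDimensional _).measurable, ?_⟩
  have hd' : LinearMap.det (Matrix.toLin' M) ≠ 0 := by rwa [LinearMap.det_toLin']
  rw [Real.map_linearMap_volume_pi_eq_smul_volume_pi hd', LinearMap.det_toLin',
    abs_inv, h]
  simp

lemma measurableEmbedding_toLin' {n : ℕ} (M : Matrix (Fin n) (Fin n) ℝ) (h : M.det ≠ 0) :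
    MeasurableEmbedding (Matrix.toLin' M) := by
  haveI : Invertible M := M.invertibleOfIsUnitDet (isUnit_iff_ne_zero.mpr h)
  let e : (Fin n → ℝ) ≃ᵐ (Fin n → ℝ) :=
    { toEquiv := (M.toLinearEquiv' ‹Invertible M›).toEquiv
      measurable_toFun :=
        ((M.toLinearEquiv' ‹Invertible M›).toLinearMap.continuous_of_finiteDimensional).measurable
      measurable_invFun := by
        exact ((M.toLinearEquiv' ‹Invertible M›).symm.toLinearMap.continuous_of_finiteDimensional).measurable }
  have he : ⇑(Matrix.toLin' M) = ⇑e := rfl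
  rw [he]
  exact e.measurableEmbedding

end SimplexAux

namespace SimplexAux

open Matrix

def sumM (n : ℕ) (σ : Equiv.Perm (Fin n)) : Matrix (Fin n) (Fin n) ℝ :=
  Matrix.of fun j k => if (k : ℕ) ≤ ((σ.symm j : Fin n) : ℕ) then 1 else 0

def triM (n : ℕ) : Matrix (Fin n) (Fin n) ℝ :=
  Matrix.of fun j k => if (k : ℕ) ≤ (j : ℕ) then 1 else 0

lemma det_triM (n : ℕ) : (triM n).det = 1 := by
  rw [Matrix.det_of_lowerTriangular]
  · simp [triM]
  · intro i j hij
    simp only [triM, Matrix.of_apply, ite_eq_right_iff]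
    intro h
    exact absurd h (by exact_mod_cast not_le.mpr hij)

lemma absdet_sumM (n : ℕ) (σ : Equiv.Perm (Fin n)) : |(sumM n σ).det| = 1 := by
  have h : sumM n σ = fun j => triM n (σ.symm j) := rfl
  have := Matrix.det_permute σ.symm (triM n)
  rw [h]
  rw [show (Matrix.det fun j => triM n (σ.symm j)) =
      Matrix.det ((triM n).submatrix σ.symm id) from rfl] at *
  rw [this, det_triM, mul_one]
  rcases Int.units_eq_one_or (Equiv.Perm.sign σ.symm) with h1 | h1 <;> rw [h1] <;> norm_num

lemma sumM_apply (n : ℕ) (σ : Equiv.Perm (Fin n)) (u : Fin n → ℝ) (j : Fin n) :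
    Matrix.toLin' (sumM n σ) u j =
      ∑ k ∈ Finset.univ.filter fun k : Fin n => (k : ℕ) ≤ ((σ.symm j : Fin n) : ℕ), u k := by
  rw [Finset.sum_filter]
  simp [Matrix.toLin'_apply, Matrix.mulVec, dotProduct, sumM, ite_mul]

end SimplexAux

namespace SimplexAux

open Matrix Finset

lemma isClosed_simplexSet (n : ℕ) (σ : Equiv.Perm (Fin n)) : IsClosed (simplexSet n σ) := by
  have h1 : IsClosed {x : Fin n → ℝ | ∀ i, x i ∈ Set.Icc (0:ℝ) 1} := by
    have : {x : Fin n → ℝ | ∀ i, x i ∈ Set.Icc (0:ℝ) 1} = Set.pi Set.univ fun _ => Set.Icc 0 1 := by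
      ext; simp [Set.pi]
    rw [this]
    exact isClosed_set_pi fun i _ => isClosed_Icc
  have h2 : IsClosed {x : Fin n → ℝ | ∀ i j : Fin n, i ≤ j → x (σ i) ≤ x (σ j)} := by
    have : {x : Fin n → ℝ | ∀ i j : Fin n, i ≤ j → x (σ i) ≤ x (σ j)} =
        ⋂ (i : Fin n) (j : Fin n) (_ : i ≤ j), {x | x (σ i) ≤ x (σ j)} := by
      ext x; simp
    rw [this]
    exact isClosed_iInter fun i => isClosed_iInter fun j => isClosed_iInter fun _ =>
      isClosed_le (continuous_apply _) (continuous_apply _)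
  exact h1.inter h2

lemma key_partial (n : ℕ) (σ : Equiv.Perm (Fin n)) (u : Fin n → ℝ) (i : Fin n) :
    Matrix.toLin' (sumM n σ) u (σ i) =
      ∑ j ∈ Finset.range ((i : ℕ) + 1), (if h : j < n then u ⟨j, h⟩ else 0) := by
  rw [sumM_apply]
  simp only [Equiv.symm_apply_apply]
  rw [Finset.sum_filter]
  have e1 : (∑ k : Fin n, if (k:ℕ) ≤ (i:ℕ) then u k else 0)
      = ∑ j ∈ Finset.range n, (if h : j < n then (if j ≤ (i:ℕ) then u ⟨j,h⟩ else 0) else 0) := by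
    rw [← Fin.sum_univ_eq_sum_range]
    exact Finset.sum_congr rfl fun k _ => by simp [k.isLt]
  rw [e1, Finset.range_eq_Ico,
    ← Finset.sum_Ico_consecutive _ (Nat.zero_le ((i:ℕ)+1)) (i.isLt : (i:ℕ)+1 ≤ n)]
  have e2 : ∑ j ∈ Finset.Ico ((i:ℕ)+1) n, (if h : j < n then (if j ≤ (i:ℕ) then u ⟨j,h⟩ else 0) else 0) = 0 := by
    refine Finset.sum_eq_zero fun j hj => ?_
    have : ¬ (j ≤ (i:ℕ)) := by
      have := (Finset.mem_Ico.mp hj).1; omega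
    split <;> simp [this]
  rw [e2, add_zero, ← Finset.range_eq_Ico]
  refine Finset.sum_congr rfl fun j hj => ?_
  have hji : j ≤ (i:ℕ) := by have := Finset.mem_range.mp hj; omega
  have hjn : j < n := lt_of_le_of_lt hji i.isLt
  simp [hjn, hji]

lemma sum_univ_dite (n : ℕ) (u : Fin n → ℝ) :
    ∑ j ∈ Finset.range n, (if h : j < n then u ⟨j, h⟩ else 0) = ∑ k, u k := by
  rw [← Fin.sum_univ_eq_sum_range]
  exact Finset.sum_congr rfl fun k _ => by simp [k.isLt]

lemma preimage_corner (n : ℕ) (hn : 0 < n) (σ : Equiv.Perm (Fin n)) :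
    (Matrix.toLin' (sumM n σ)) ⁻¹' (simplexSet n σ) = corner n := by
  ext u
  constructor
  · rintro ⟨h1, h2⟩
    constructor
    · intro k
      have hk : u k = Matrix.toLin' (sumM n σ) u (σ k) -
          ∑ j ∈ Finset.range (k : ℕ), (if h : j < n then u ⟨j, h⟩ else 0) := by
        have := key_partial n σ u k
        rw [Finset.sum_range_succ] at this
        simp only [k.isLt, dif_pos, Fin.eta] at this
        linarith
      rcases Nat.eq_zero_or_pos (k : ℕ) with h0 | h0
      · rw [hk, h0]
        simpa using (h1 (σ k)).1
      · obtain ⟨m, hm⟩ := Nat.exists_eq_succ_of_ne_zero (Nat.pos_iff_ne_zero.mp h0)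
        have hmn : m < n := by have := k.isLt; omega
        have hkey := key_partial n σ u ⟨m, hmn⟩
        simp only [Fin.val_mk] at hkey
        rw [hk, hm, Nat.succ_eq_add_one, ← hkey]
        have hle : (⟨m, hmn⟩ : Fin n) ≤ k := by
          rw [Fin.le_def, Fin.val_mk]; omega
        have := h2 ⟨m, hmn⟩ k hle
        linarith
    · have hkey := key_partial n σ u ⟨n - 1, by omega⟩
      simp only [Fin.val_mk] at hkey
      rw [show n - 1 + 1 = n from by omega, sum_univ_dite] at hkey
      rw [← hkey]
      exact (h1 _).2
  · rintro ⟨hpos, hsum⟩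
    constructor
    · intro j
      rw [Set.mem_Icc, sumM_apply]
      constructor
      · exact Finset.sum_nonneg fun k _ => hpos k
      · refine le_trans (Finset.sum_le_sum_of_subset_of_nonneg (Finset.filter_subset _ _)
          (fun k _ _ => hpos k)) hsum
    · intro i i' hii'
      rw [key_partial, key_partial]
      refine Finset.sum_le_sum_of_subset_of_nonneg
        (Finset.range_subset_range.mpr (by have := Fin.le_def.mp hii'; omega))
        (fun j _ _ => ?_)
      split
      · exact hpos _
      · exact le_refl 0
end SimplexAux

namespace SimplexAux

open Matrix Finset
open scoped ENNReal

lemma volume_simplexSet_eq (n : ℕ) (hn : 0 < n) (σ : Equiv.Perm (Fin n)) :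
    volume (simplexSet n σ) = volume (corner n) := by
  rw [← preimage_corner n hn σ]
  exact ((measurePreserving_toLin' _ (absdet_sumM n σ)).measure_preimage
    (isClosed_simplexSet n σ).measurableSet.nullMeasurableSet).symm

lemma hyperplane_null (n : ℕ) (p q : Fin n) (hpq : p ≠ q) :
    volume {x : Fin n → ℝ | x p = x q} = 0 := by
  set l : (Fin n → ℝ) →ₗ[ℝ] ℝ := (LinearMap.proj p : (Fin n → ℝ) →ₗ[ℝ] ℝ) - (LinearMap.proj q : (Fin n → ℝ) →ₗ[ℝ] ℝ) with hl
  have hset : {x : Fin n → ℝ | x p = x q} = (LinearMap.ker l : Set (Fin n → ℝ)) := by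
    ext x
    simp [hl, LinearMap.mem_ker, sub_eq_zero, LinearMap.proj]
  rw [hset]
  refine MeasureTheory.Measure.addHaar_submodule _ _ ?_
  intro htop
  have h1 : Pi.single p (1:ℝ) ∈ LinearMap.ker l := htop ▸ Submodule.mem_top
  rw [LinearMap.mem_ker, hl] at h1
  simp only [LinearMap.sub_apply, LinearMap.proj_apply, Function.eval] at h1
  rw [Pi.single_eq_same, Pi.single_eq_of_ne (Ne.symm hpq)] at h1
  norm_num at h1

lemma strictMono_perm_eq_one {n : ℕ} (π : Equiv.Perm (Fin n)) (h : StrictMono π) : π = 1 := by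
  have := (h.range_inj (strictMono_id (α := Fin n))).mp
    (by rw [Set.range_id]; exact Set.range_eq_univ.mpr π.surjective)
  exact Equiv.coe_fn_injective (by simp [this])

lemma simplexSet_inter_null (n : ℕ) (σ τ : Equiv.Perm (Fin n)) (h : σ ≠ τ) :
    volume (simplexSet n σ ∩ simplexSet n τ) = 0 := by
  set π : Equiv.Perm (Fin n) := σ.trans τ.symm with hπ
  have hπ1 : π ≠ 1 := by
    intro h1
    apply h
    refine Equiv.ext fun i => ?_
    have := congrArg (fun e : Equiv.Perm (Fin n) => τ (e i)) h1
    simpa [hπ] using this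
  have hnsm : ¬ StrictMono ⇑π := fun hs => hπ1 (strictMono_perm_eq_one π hs)
  rw [StrictMono] at hnsm
  push_neg at hnsm
  obtain ⟨a, b, hab, hba⟩ := hnsm
  have hne : σ a ≠ σ b := fun hc => absurd (σ.injective hc) (ne_of_lt hab)
  have hπba : π b ≤ π a := hba
  refine measure_mono_null (fun x hx => ?_) (hyperplane_null n (σ a) (σ b) hne)
  obtain ⟨hxσ, hxτ⟩ := hx
  have h1 : x (σ a) ≤ x (σ b) := hxσ.2 a b (le_of_lt hab)
  have h2 : x (σ b) ≤ x (σ a) := by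
    have := hxτ.2 (π b) (π a) hπba
    simpa [hπ] using this
  exact le_antisymm h1 h2

lemma factorial_mul_volume_corner_le (n : ℕ) (hn : 0 < n) :
    (n.factorial : ℝ≥0∞) * volume (corner n) ≤ 1 := by
  have hsum : ∑ τ : Equiv.Perm (Fin n), volume (simplexSet n τ)
      = volume (⋃ τ ∈ (Finset.univ : Finset (Equiv.Perm (Fin n))), simplexSet n τ) := by
    refine (measure_biUnion_finset₀ ?_ ?_).symm
    · intro τ hτ τ' hτ' hne
      exact simplexSet_inter_null n τ τ' hne
    · exact fun τ _ => (isClosed_simplexSet n τ).measurableSet.nullMeasurableSet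
  have hcube : volume (⋃ τ ∈ (Finset.univ : Finset (Equiv.Perm (Fin n))), simplexSet n τ) ≤ 1 := by
    have hsub : (⋃ τ ∈ (Finset.univ : Finset (Equiv.Perm (Fin n))), simplexSet n τ) ⊆
        Set.pi Set.univ fun _ : Fin n => Set.Icc (0:ℝ) 1 := by
      intro x hx
      simp only [Set.mem_iUnion] at hx
      obtain ⟨τ, _, hxτ⟩ := hx
      intro i _
      exact hxτ.1 i
    refine le_trans (measure_mono hsub) ?_
    rw [volume_pi_pi]
    simp [Real.volume_Icc]
  have heq : ∑ τ : Equiv.Perm (Fin n), volume (simplexSet n τ)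
      = (n.factorial : ℝ≥0∞) * volume (corner n) := by
    have : ∀ τ : Equiv.Perm (Fin n), volume (simplexSet n τ) = volume (corner n) :=
      fun τ => volume_simplexSet_eq n hn τ
    rw [Finset.sum_congr rfl fun τ _ => this τ, Finset.sum_const, Finset.card_univ,
      Fintype.card_perm, Fintype.card_fin, nsmul_eq_mul]
  rw [← heq, hsum]
  exact hcube

end SimplexAux

namespace SimplexAux

open Matrix Finset
open scoped ENNReal

def permM (n : ℕ) (e : Equiv.Perm (Fin n)) : Matrix (Fin n) (Fin n) ℝ :=
  Matrix.of fun j k => if e k = j then 1 else 0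

lemma permM_apply (n : ℕ) (e : Equiv.Perm (Fin n)) (u : Fin n → ℝ) (j : Fin n) :
    Matrix.toLin' (permM n e) u j = u (e.symm j) := by
  simp only [Matrix.toLin'_apply, Matrix.mulVec, dotProduct, permM, Matrix.of_apply,
    ite_mul, one_mul, zero_mul]
  have hsum : (∑ k, if e k = j then u k else 0) = ∑ k, if k = e.symm j then u k else 0 :=
    Finset.sum_congr rfl fun k _ => if_congr (Equiv.apply_eq_iff_eq_symm_apply e) rfl rfl
  rw [hsum, Finset.sum_ite_eq' Finset.univ (e.symm j) u, if_pos (Finset.mem_univ _)]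

lemma absdet_permM (n : ℕ) (e : Equiv.Perm (Fin n)) : |(permM n e).det| = 1 := by
  have hM : permM n e = (1 : Matrix (Fin n) (Fin n) ℝ).submatrix e.symm id := by
    ext j k
    have hiff : (e k = j) ↔ (e.symm j = k) := by
      constructor
      · rintro rfl; simp
      · rintro rfl; simp
    simp only [permM, Matrix.of_apply, Matrix.submatrix_apply, id, Matrix.one_apply]
    rw [if_congr hiff rfl rfl]
  rw [hM]
  rw [Matrix.det_permute e.symm (1 : Matrix (Fin n) (Fin n) ℝ), Matrix.det_one, mul_one]
  rcases Int.units_eq_one_or (Equiv.Perm.sign e.symm) with h1 | h1 <;> rw [h1] <;> norm_num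

def reflM (m : ℕ) : Matrix (Fin (m+1)) (Fin (m+1)) ℝ :=
  Matrix.of fun j k => if j = 0 then -1 else if k = j then 1 else 0

lemma reflM_mul_self (m : ℕ) : reflM m * reflM m = 1 := by
  ext j k
  rw [Matrix.mul_apply]
  by_cases hj : j = 0
  · subst hj
    have hcol : ∑ l, reflM m l k = if k = 0 then -1 else 0 := by
      rw [Fin.sum_univ_succ]
      by_cases hk : k = 0
      · subst hk
        simp [reflM, Fin.succ_ne_zero, (Fin.succ_ne_zero _).symm]
      · obtain ⟨k', rfl⟩ : ∃ k', k = Fin.succ k' := by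
          rcases Fin.eq_zero_or_eq_succ k with h | h
          · exact absurd h hk
          · exact h
        simp [reflM, Fin.succ_ne_zero, Fin.succ_inj, hk]
    have : ∑ l, reflM m 0 l * reflM m l k = -∑ l, reflM m l k := by
      rw [← Finset.sum_neg_distrib]
      refine Finset.sum_congr rfl fun l _ => ?_
      have h0l : reflM m 0 l = -1 := by simp [reflM]
      rw [h0l]; ring
    rw [this, hcol]
    by_cases hk : k = 0 <;> simp [Matrix.one_apply, hk, eq_comm]
  · have hrow : ∀ l, reflM m j l = if l = j then 1 else 0 := fun l => by simp [reflM, hj]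
    rw [Finset.sum_congr rfl fun l _ => by rw [hrow l, ite_mul, one_mul, zero_mul]]
    rw [Finset.sum_ite_eq' Finset.univ j (fun l => reflM m l k), if_pos (Finset.mem_univ _)]
    simp [reflM, hj, Matrix.one_apply, eq_comm]

lemma absdet_reflM (m : ℕ) : |(reflM m).det| = 1 := by
  have := congrArg Matrix.det (reflM_mul_self m)
  rw [Matrix.det_mul, Matrix.det_one] at this
  rcases mul_self_eq_one_iff.mp this with h | h <;> rw [h] <;> norm_num

lemma reflM_apply (m : ℕ) (u : Fin (m+1) → ℝ) (j : Fin (m+1)) :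
    Matrix.toLin' (reflM m) u j = if j = 0 then -∑ i, u i else u j := by
  simp only [Matrix.toLin'_apply, Matrix.mulVec, dotProduct, reflM, Matrix.of_apply]
  by_cases hj : j = 0
  · simp [hj, neg_mul, Finset.sum_neg_distrib]
  · simp only [hj, if_false, ite_mul, one_mul, zero_mul]
    rw [Finset.sum_ite_eq' Finset.univ j u, if_pos (Finset.mem_univ _)]

lemma integral_comp_perm (m : ℕ) (e : Equiv.Perm (Fin (m+1))) (g : (Fin (m+1) → ℝ) → ℝ) :
    ∫ u in corner (m+1), g (fun j => u (e.symm j)) = ∫ u in corner (m+1), g u := by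
  have hdet0 : (permM (m+1) e).det ≠ 0 := by
    intro h; have := absdet_permM (m+1) e; rw [h] at this; simp at this
  have hMP := measurePreserving_toLin' _ (absdet_permM (m+1) e)
  have hEmb := measurableEmbedding_toLin' _ hdet0
  have hpre : (Matrix.toLin' (permM (m+1) e)) ⁻¹' corner (m+1) = corner (m+1) := by
    ext u
    simp only [Set.mem_preimage]
    constructor
    · rintro ⟨hpos, hsum⟩
      constructor
      · intro i
        have := hpos (e i)
        rwa [permM_apply, Equiv.symm_apply_apply] at this
      · have : ∑ j, Matrix.toLin' (permM (m+1) e) u j = ∑ j, u j := by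
          rw [Finset.sum_congr rfl fun j _ => permM_apply (m+1) e u j]
          exact Equiv.sum_comp e.symm u
        rwa [this] at hsum
    · rintro ⟨hpos, hsum⟩
      constructor
      · intro j
        rw [permM_apply]
        exact hpos _
      · rw [Finset.sum_congr rfl fun j _ => permM_apply (m+1) e u j]
        rw [Equiv.sum_comp e.symm u]
        exact hsum
  have := hMP.setIntegral_preimage_emb hEmb g (corner (m+1))
  rw [hpre] at this
  rw [← this]
  refine setIntegral_congr_fun (measurableSet_corner _) fun u _ => ?_
  congr 1
  funext j
  rw [permM_apply]

lemma integral_eval_eq_zero (m : ℕ) (j : Fin (m+1)) :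
    ∫ u in corner (m+1), u j = ∫ u in corner (m+1), u 0 := by
  have := integral_comp_perm m (Equiv.swap 0 j) (fun y => y j)
  rw [← this]
  refine setIntegral_congr_fun (measurableSet_corner _) fun u _ => ?_
  simp [Equiv.symm_swap, Equiv.swap_apply_right]

lemma integral_head (m : ℕ) :
    ∫ u in corner (m+1), (1 - ∑ i, u i) = ∫ u in corner (m+1), u 0 := by
  classical
  set ρ : (Fin (m+1) → ℝ) → (Fin (m+1) → ℝ) :=
    fun u => Pi.single 0 1 + Matrix.toLin' (reflM m) u with hρdef
  have hρ : ∀ u j, ρ u j = if j = 0 then 1 - ∑ i, u i else u j := by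
    intro u j
    rw [hρdef]
    simp only [Pi.add_apply, reflM_apply]
    by_cases hj : j = 0
    · subst hj; rw [if_pos rfl, if_pos rfl, Pi.single_eq_same]; ring
    · rw [if_neg hj, if_neg hj, Pi.single_eq_of_ne hj, zero_add]
  have hdet0 : (reflM m).det ≠ 0 := by
    intro h; have := absdet_reflM m; rw [h] at this; simp at this
  have hMP : MeasurePreserving ρ volume volume := by
    have h1 := measurePreserving_toLin' _ (absdet_reflM m)
    have h2 : MeasurePreserving (fun x : Fin (m+1) → ℝ => Pi.single 0 1 + x) volume volume :=
      measurePreserving_add_left volume _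
    exact h2.comp h1
  have hEmb : MeasurableEmbedding ρ := by
    have h1 := measurableEmbedding_toLin' _ hdet0
    have h2 : MeasurableEmbedding (fun x : Fin (m+1) → ℝ => Pi.single 0 1 + x) :=
      (MeasurableEquiv.addLeft (Pi.single 0 1)).measurableEmbedding
    exact h2.comp h1
  have hsumρ : ∀ u, ∑ j, ρ u j = 1 - u 0 := by
    intro u
    have h1 : ∀ i : Fin m, ρ u i.succ = u i.succ := fun i => by
      rw [hρ u i.succ, if_neg (Fin.succ_ne_zero i)]
    rw [Fin.sum_univ_succ (f := fun j => ρ u j), hρ u 0, if_pos rfl,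
      Finset.sum_congr rfl fun i _ => h1 i]
    have := Fin.sum_univ_succ (f := u)
    linarith
  have hpre : ρ ⁻¹' corner (m+1) = corner (m+1) := by
    ext u
    simp only [Set.mem_preimage]
    constructor
    · rintro ⟨hpos, hsum⟩
      have h00 := hpos 0
      rw [hρ u 0, if_pos rfl] at h00
      rw [hsumρ u] at hsum
      constructor
      · intro i
        by_cases hi : i = 0
        · subst hi; linarith
        · have := hpos i
          rwa [hρ u i, if_neg hi] at this
      · linarith
    · rintro ⟨hpos, hsum⟩
      constructor
      · intro j
        rw [hρ u j]
        by_cases hj : j = 0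
        · simp [hj]; linarith
        · simp [hj]; exact hpos j
      · rw [hsumρ u]
        have := hpos 0
        linarith
  have hint := hMP.setIntegral_preimage_emb hEmb (fun y => 1 - ∑ i, y i) (corner (m+1))
  rw [hpre] at hint
  rw [← hint]
  refine setIntegral_congr_fun (measurableSet_corner _) fun u _ => ?_
  simp only [hsumρ u]
  ring

end SimplexAux

namespace SimplexAux

open Matrix Finset
open scoped ENNReal

lemma integral_eval_value (m : ℕ) (j : Fin (m+1)) :
    ∫ u in corner (m+1), u j = (volume (corner (m+1))).toReal / ((m:ℝ)+2) := by
  have hintj : ∀ k : Fin (m+1),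
      IntegrableOn (fun u : Fin (m+1) → ℝ => u k) (corner (m+1)) volume :=
    fun k => (continuous_apply k).continuousOn.integrableOn_compact (isCompact_corner _)
  have hints : IntegrableOn (fun u : Fin (m+1) → ℝ => ∑ i, u i) (corner (m+1)) volume := by
    have : Continuous fun u : Fin (m+1) → ℝ => ∑ i, u i :=
      continuous_finset_sum _ fun i _ => continuous_apply i
    exact this.continuousOn.integrableOn_compact (isCompact_corner _)
  have hint1 : IntegrableOn (fun u : Fin (m+1) → ℝ => 1 - ∑ i, u i) (corner (m+1)) volume := by
    have : Continuous fun u : Fin (m+1) → ℝ => 1 - ∑ i, u i :=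
      continuous_const.sub (continuous_finset_sum _ fun i _ => continuous_apply i)
    exact this.continuousOn.integrableOn_compact (isCompact_corner _)
  have hV : ∫ _ in corner (m+1), (1:ℝ) = (volume (corner (m+1))).toReal := by
    rw [setIntegral_const]; simp; rfl
  have hsplit : (∫ u in corner (m+1), (1 - ∑ i, u i)) + (∫ u in corner (m+1), (∑ i, u i))
      = (volume (corner (m+1))).toReal := by
    rw [← integral_add hint1 hints]
    simp only [sub_add_cancel]
    exact hV
  have hsum : (∫ u in corner (m+1), (∑ i, u i))
      = ((m:ℝ)+1) * ∫ u in corner (m+1), u 0 := by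
    rw [integral_finset_sum Finset.univ fun i _ => hintj i]
    rw [Finset.sum_congr rfl fun i _ => integral_eval_eq_zero m i]
    rw [Finset.sum_const, Finset.card_univ, Fintype.card_fin, nsmul_eq_mul]
    push_cast; ring
  have hhead := integral_head m
  have h0 : ∫ u in corner (m+1), u 0 = (volume (corner (m+1))).toReal / ((m:ℝ)+2) := by
    rw [eq_div_iff (by positivity)]
    rw [hhead, hsum] at hsplit
    linarith
  rw [integral_eval_eq_zero m j, h0]

lemma toLin'_single (m : ℕ) (σ : Equiv.Perm (Fin (m+1))) (j : Fin (m+1)) :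
    Matrix.toLin' (sumM (m+1) σ) (Pi.single j 1) = simplexVertex (m+1) σ ((m+1) - (j:ℕ)) := by
  funext j'
  rw [sumM_apply]
  have h2 : (∑ k ∈ Finset.univ.filter fun k : Fin (m+1) => (k:ℕ) ≤ ((σ.symm j' : Fin (m+1)) : ℕ),
        Pi.single j (1:ℝ) k)
      = ∑ k ∈ Finset.univ.filter fun k : Fin (m+1) => (k:ℕ) ≤ ((σ.symm j' : Fin (m+1)) : ℕ),
        (if k = j then (1:ℝ) else 0) :=
    Finset.sum_congr rfl fun k _ => Pi.single_apply j (1:ℝ) k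
  rw [h2, Finset.sum_ite_eq' _ j fun _ => (1:ℝ)]
  simp only [Finset.mem_filter, Finset.mem_univ, true_and]
  rw [show simplexVertex (m+1) σ ((m+1) - (j:ℕ)) j'
      = if (m+1) - ((m+1) - (j:ℕ)) ≤ ((σ.symm j' : Fin (m+1)) : ℕ) then (1:ℝ) else 0 from rfl,
    Nat.sub_sub_self (le_of_lt j.isLt)]

end SimplexAux

open SimplexAux in
open scoped ENNReal in
/-- If `f` is the affine function with values `f(v_j^σ) = c_j` at the vertices of the simplex
`Σ_σ`, then `∫_{Σ_σ} f² ≤ (1/(n+1)!) Σ_j c_j²`. -/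
theorem integral_sq_affine_interpolation_le (n : ℕ) (hn : 1 ≤ n) (σ : Equiv.Perm (Fin n))
    (c : Fin (n + 1) → ℝ) (f : (Fin n → ℝ) →ᵃ[ℝ] ℝ)
    (hf : ∀ i : Fin (n + 1), f (simplexVertex n σ (i : ℕ)) = c i) :
    ∫ x in simplexSet n σ, (f x) ^ 2
      ≤ (1 / (Nat.factorial (n + 1) : ℝ)) * ∑ i : Fin (n + 1), (c i) ^ 2 := by
  
  classical
  obtain ⟨m, rfl⟩ : ∃ m, n = m + 1 := ⟨n - 1, by omega⟩
  set ψ := Matrix.toLin' (sumM (m+1) σ) with hψdef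
  have hMP := measurePreserving_toLin' _ (absdet_sumM (m+1) σ)
  have hdet0 : (sumM (m+1) σ).det ≠ 0 := by
    intro h
    have := absdet_sumM (m+1) σ
    rw [h] at this
    simp at this
  have hEmb := measurableEmbedding_toLin' _ hdet0
  have hpre := preimage_corner (m+1) (Nat.succ_pos m) σ
  have hchange : ∫ x in simplexSet (m+1) σ, (f x) ^ 2
      = ∫ u in corner (m+1), (f (ψ u)) ^ 2 := by
    rw [← hpre]
    exact (hMP.setIntegral_preimage_emb hEmb (fun x => f x ^ 2) _).symm
  rw [hchange]
  -- weights
  set W : (Fin (m+1) → ℝ) → Fin (m+2) → ℝ :=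
    fun u => Fin.cons (1 - ∑ i, u i) (fun j => u j.rev) with hWdef
  have hW0 : ∀ u, W u 0 = 1 - ∑ i, u i := fun u => rfl
  have hWs : ∀ u (j : Fin (m+1)), W u j.succ = u j.rev := fun u j => by
    simp [hWdef]
  -- vertex index
  set vIdx : Fin (m+1) → Fin (m+2) := fun j => ⟨(m+1) - (j:ℕ), by omega⟩ with hvIdxdef
  have hvertex : ∀ j : Fin (m+1), f (ψ (Pi.single j 1)) = c (vIdx j) := by
    intro j
    rw [hψdef, toLin'_single m σ j]
    have := hf (vIdx j)
    rwa [show ((vIdx j : Fin (m+2)) : ℕ) = (m+1) - (j:ℕ) from rfl] at this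
  have hf0 : f 0 = c 0 := by
    have h00 : simplexVertex (m+1) σ 0 = (0 : Fin (m+1) → ℝ) := by
      funext j
      exact if_neg (by have := (σ.symm j).isLt; omega)
    have := hf 0
    rwa [show (((0 : Fin (m+2))) : ℕ) = 0 from rfl, h00] at this
  have hlin : ∀ v : Fin (m+1) → ℝ, f v = f.linear v + f 0 := by
    intro v
    have := f.map_vadd (0 : Fin (m+1) → ℝ) v
    simpa [vadd_eq_add] using this
  have hdecomp : ∀ u : Fin (m+1) → ℝ, ψ u = ∑ j, u j • ψ (Pi.single j 1) := by
    intro u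
    have hu : u = ∑ j, u j • (Pi.single j (1:ℝ) : Fin (m+1) → ℝ) := by
      funext i
      rw [Finset.sum_apply]
      simp only [Pi.smul_apply, Pi.single_apply, smul_eq_mul, mul_ite, mul_one, mul_zero]
      rw [Finset.sum_ite_eq Finset.univ i u, if_pos (Finset.mem_univ _)]
    conv_lhs => rw [hu]
    rw [map_sum]
    exact Finset.sum_congr rfl fun j _ => by rw [LinearMap.map_smul]
  have hform : ∀ u : Fin (m+1) → ℝ, f (ψ u) = ∑ k : Fin (m+2), W u k * c k := by
    intro u
    have h2 : ∀ j : Fin (m+1), f.linear (ψ (Pi.single j 1)) = c (vIdx j) - c 0 := by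
      intro j
      have := hlin (ψ (Pi.single j 1))
      rw [hvertex j] at this
      linarith
    have h1 : f (ψ u) = c 0 + ∑ j, u j * (c (vIdx j) - c 0) := by
      rw [hlin (ψ u), hdecomp u, map_sum]
      have h3 : ∑ j, f.linear (u j • ψ (Pi.single j 1)) = ∑ j, u j * (c (vIdx j) - c 0) :=
        Finset.sum_congr rfl fun j _ => by rw [LinearMap.map_smul, h2 j, smul_eq_mul]
      rw [h3, hf0]
      ring
    have hR : ∑ k : Fin (m+2), W u k * c k
        = (1 - ∑ i, u i) * c 0 + ∑ j : Fin (m+1), u j.rev * c j.succ := by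
      rw [Fin.sum_univ_succ]
      rw [hW0]
      have h8 : ∑ j : Fin (m+1), W u j.succ * c j.succ
          = ∑ j : Fin (m+1), u j.rev * c j.succ :=
        Finset.sum_congr rfl fun j _ => by rw [hWs]
      rw [h8]
    have hrev : ∑ j : Fin (m+1), u j.rev * c j.succ
        = ∑ j : Fin (m+1), u j * c ((Fin.rev j).succ) :=
      Fintype.sum_bijective Fin.rev Fin.rev_involutive.bijective _ _
        (fun j => by rw [Fin.rev_rev])
    have hc' : ∀ j : Fin (m+1), ((Fin.rev j).succ : Fin (m+2)) = vIdx j := by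
      intro j
      apply Fin.ext
      have hval : ((Fin.rev j) : ℕ) = m - (j : ℕ) := by
        rw [Fin.val_rev]; omega
      have h7 : ((vIdx j) : ℕ) = m + 1 - (j : ℕ) := rfl
      rw [Fin.val_succ, hval, h7]
      have := j.isLt
      omega
    have hc'' : ∑ j : Fin (m+1), u j * c ((Fin.rev j).succ)
        = ∑ j : Fin (m+1), u j * c (vIdx j) :=
      Finset.sum_congr rfl fun j _ => by rw [hc' j]
    rw [h1, hR, hrev, hc'']
    have hexp : ∑ j, u j * (c (vIdx j) - c 0)
        = (∑ j, u j * c (vIdx j)) - (∑ j, u j) * c 0 := by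
      rw [Finset.sum_mul]
      rw [← Finset.sum_sub_distrib]
      exact Finset.sum_congr rfl fun j _ => by ring
    rw [hexp]
    ring
  -- pointwise bound
  have hpt : ∀ u ∈ corner (m+1), (f (ψ u)) ^ 2 ≤ ∑ k : Fin (m+2), W u k * (c k) ^ 2 := by
    rintro u ⟨hpos, hsum⟩
    have hw0 : ∀ k, 0 ≤ W u k := by
      intro k
      refine Fin.cases ?_ ?_ k
      · rw [hW0]; linarith
      · intro j; rw [hWs]; exact hpos _
    have hw1 : ∑ k, W u k = 1 := by
      rw [Fin.sum_univ_succ]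
      have hs : ∑ j : Fin (m+1), W u j.succ = ∑ j, u j := by
        have h4 : ∑ j : Fin (m+1), W u j.succ = ∑ j : Fin (m+1), u j.rev :=
          Finset.sum_congr rfl fun j _ => hWs u j
        rw [h4]
        exact Fintype.sum_bijective Fin.rev Fin.rev_involutive.bijective _ _ (fun j => rfl)
      rw [hW0, hs]
      ring
    have hjen := (Even.convexOn_pow (even_two) (𝕜 := ℝ)).map_sum_le
      (t := Finset.univ) (w := W u) (p := c) (fun k _ => hw0 k) hw1 (fun k _ => Set.mem_univ _)
    rw [hform u]
    simpa [smul_eq_mul] using hjen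
  -- continuity and integrability
  have hWcont : ∀ k : Fin (m+2), Continuous fun u : Fin (m+1) → ℝ => W u k := by
    intro k
    refine Fin.cases ?_ ?_ k
    · simp only [hW0]
      exact continuous_const.sub (continuous_finset_sum _ fun i _ => continuous_apply i)
    · intro j
      simp only [hWs]
      exact continuous_apply _
  have hfc : Continuous fun u : Fin (m+1) → ℝ => f (ψ u) :=
    f.continuous_of_finiteDimensional.comp (LinearMap.continuous_of_finiteDimensional ψ)
  have hint1 : IntegrableOn (fun u : Fin (m+1) → ℝ => (f (ψ u)) ^ 2) (corner (m+1)) volume :=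
    (hfc.pow 2).continuousOn.integrableOn_compact (isCompact_corner _)
  have hintk : ∀ k : Fin (m+2), IntegrableOn (fun u : Fin (m+1) → ℝ => W u k * (c k) ^ 2)
      (corner (m+1)) volume := fun k =>
    ((hWcont k).mul continuous_const).continuousOn.integrableOn_compact (isCompact_corner _)
  have hcont2 : Continuous fun u : Fin (m+1) → ℝ => ∑ k : Fin (m+2), W u k * (c k) ^ 2 :=
    continuous_finset_sum _ fun k _ => (hWcont k).mul continuous_const
  have hint2 : IntegrableOn (fun u : Fin (m+1) → ℝ => ∑ k : Fin (m+2), W u k * (c k) ^ 2)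
      (corner (m+1)) volume :=
    hcont2.continuousOn.integrableOn_compact (isCompact_corner _)
  have hmono := setIntegral_mono_on hint1 hint2 (measurableSet_corner _) hpt
  -- value of the weight integrals
  set V := (volume (corner (m+1))).toReal with hVdef
  have hIW : ∀ k : Fin (m+2), (∫ u in corner (m+1), W u k) = V / ((m:ℝ)+2) := by
    intro k
    refine Fin.cases ?_ ?_ k
    · simp only [hW0]
      rw [integral_head m, integral_eval_value m 0]
    · intro j
      simp only [hWs]
      rw [integral_eval_value m j.rev]
  have hRHS : (∫ u in corner (m+1), ∑ k : Fin (m+2), W u k * (c k) ^ 2)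
      = (V / ((m:ℝ)+2)) * ∑ k : Fin (m+2), (c k) ^ 2 := by
    rw [integral_finset_sum Finset.univ fun k _ => hintk k]
    have h5 : ∀ k : Fin (m+2), (∫ u in corner (m+1), W u k * (c k) ^ 2)
        = (V / ((m:ℝ)+2)) * (c k) ^ 2 := by
      intro k
      rw [integral_mul_const, hIW k]
    rw [Finset.sum_congr rfl fun k _ => h5 k, ← Finset.mul_sum]
  -- volume bound
  have hvol := factorial_mul_volume_corner_le (m+1) (Nat.succ_pos m)
  have hfactne : (((m+1).factorial : ℕ) : ℝ≥0∞) ≠ 0 := by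
    simp [Nat.factorial_ne_zero]
  have hvle : volume (corner (m+1)) ≤ ((((m+1).factorial : ℕ) : ℝ≥0∞))⁻¹ := by
    rw [ENNReal.le_inv_iff_mul_le, mul_comm]
    exact hvol
  have hVle : V ≤ (((m+1).factorial : ℕ) : ℝ)⁻¹ := by
    rw [hVdef]
    calc (volume (corner (m+1))).toReal
        ≤ (((((m+1).factorial : ℕ) : ℝ≥0∞))⁻¹).toReal :=
          ENNReal.toReal_mono (ENNReal.inv_ne_top.mpr hfactne) hvle
      _ = (((m+1).factorial : ℕ) : ℝ)⁻¹ := by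
          rw [ENNReal.toReal_inv, ENNReal.toReal_natCast]
  have hV0 : (0:ℝ) ≤ V := ENNReal.toReal_nonneg
  have hfpos : (0:ℝ) < ((m+1).factorial : ℕ) := by
    exact_mod_cast (m+1).factorial_pos
  have hcoef : V / ((m:ℝ)+2) ≤ 1 / (((m+1+1).factorial : ℕ) : ℝ) := by
    rw [Nat.factorial_succ]
    push_cast
    rw [div_le_div_iff₀ (by positivity) (by positivity)]
    calc V * (((m:ℝ)+1+1) * ((m+1).factorial : ℕ))
        = (V * ((m+1).factorial : ℕ)) * ((m:ℝ)+2) := by ring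
      _ ≤ ((((m+1).factorial : ℕ) : ℝ)⁻¹ * ((m+1).factorial : ℕ)) * ((m:ℝ)+2) := by
          have h6 : V * ((m+1).factorial : ℕ) ≤ (((m+1).factorial : ℕ) : ℝ)⁻¹ * ((m+1).factorial : ℕ) :=
            mul_le_mul_of_nonneg_right hVle hfpos.le
          nlinarith
      _ = 1 * ((m:ℝ)+1+1) := by rw [inv_mul_cancel₀ (ne_of_gt hfpos)]; ring
      _ ≤ 1 * ((m:ℝ)+2) := by linarith
  have hsq : (0:ℝ) ≤ ∑ k : Fin (m+2), (c k) ^ 2 :=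
    Finset.sum_nonneg fun k _ => sq_nonneg _
  calc ∫ u in corner (m+1), (f (ψ u)) ^ 2
      ≤ ∫ u in corner (m+1), ∑ k : Fin (m+2), W u k * (c k) ^ 2 := hmono
    _ = (V / ((m:ℝ)+2)) * ∑ k : Fin (m+2), (c k) ^ 2 := hRHS
    _ ≤ (1 / (((m+1+1).factorial : ℕ) : ℝ)) * ∑ k : Fin (m+2), (c k) ^ 2 :=
        mul_le_mul_of_nonneg_right hcoef hsq
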